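/- For every nonnegative integer n and every real number x, the n-th Hermite polynomial satisfies the integral representation H_n(x) e^{-x²} = ((-2i)ⁿ/√π) ∫_{-∞}^{∞} tⁿ e^{-t² + 2ixt} dt. -/

import Mathlib

open Complex

/-- Physicists' Hermite polynomial `H_n(x) = n! ∑_{k=0}^{⌊n/2⌋} (-1)^k (2x)^{n-2k}/(k!(n-2k)!)`. -/
noncomputable def Hpoly (n : ℕ) (x : ℂ) : ℂ :=
  (Nat.factorial n) * ∑ k ∈ Finset.range (n / 2 + 1),
    (-1 : ℂ) ^ k * (2 * x) ^ (n - 2 * k) / ((Nat.factorial k) * (Nat.factorial (n - 2 * k)))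

open Finset

/-- coefficient `n.choose (2k) * (2k).choose k * k! = n!/(k!(n-2k)!)` -/
def Hcoef (n k : ℕ) : ℕ := n.choose (2 * k) * ((2 * k).choose k * k.factorial)

noncomputable def Hterm (n k : ℕ) (x : ℂ) : ℂ :=
  (-1 : ℂ) ^ k * (2 * x) ^ (n - 2 * k) * (Hcoef n k : ℂ)

lemma choose_id (n k : ℕ) :
    (n + 2).choose (2 * k + 2) * (2 * k + 2).factorial =
      (n + 1).choose (2 * k + 2) * (2 * k + 2).factorial
        + 2 * (n + 1) * n.choose (2 * k) * (2 * k).factorial * (k + 1) := by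
  have pascal : (n + 2).choose (2 * k + 2)
      = (n + 1).choose (2 * k + 1) + (n + 1).choose (2 * k + 2) :=
    Nat.choose_succ_succ (n + 1) (2 * k + 1)
  have h1 : (n + 1) * n.choose (2 * k) = (n + 1).choose (2 * k + 1) * (2 * k + 1) :=
    Nat.add_one_mul_choose_eq n (2 * k)
  have h2 : (2 * k + 2).factorial = (2 * k + 2) * ((2 * k + 1) * (2 * k).factorial) := by
    rw [Nat.factorial_succ, Nat.factorial_succ]
  rw [pascal, h2]
  nlinarith [h1]

lemma central_fact (k : ℕ) : (2 * k).choose k * k.factorial * k.factorial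
    = (2 * k).factorial := by
  have h := Nat.choose_mul_factorial_mul_factorial (show k ≤ 2 * k by omega)
  rwa [show 2 * k - k = k by omega] at h

lemma Hcoef_rec (n k : ℕ) :
    Hcoef (n + 2) (k + 1) = Hcoef (n + 1) (k + 1) + 2 * (n + 1) * Hcoef n k := by
  have hpos : 0 < (k + 1).factorial := Nat.factorial_pos _
  apply Nat.eq_of_mul_eq_mul_right hpos
  have e1 := central_fact (k + 1)
  have e0 := central_fact k
  have key := choose_id n k
  have hfs : (k + 1).factorial = (k + 1) * k.factorial := Nat.factorial_succ k
  have h2 : 2 * (k + 1) = 2 * k + 2 := by ring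
  unfold Hcoef
  rw [h2] at e1 ⊢
  zify at e1 e0 key hfs ⊢
  linear_combination (((n+2).choose (2*k+2) : ℤ) - ((n+1).choose (2*k+2) : ℤ)) * e1 + key
    - 2 * ((n : ℤ) + 1) * ((k : ℤ) + 1) * ((n.choose (2*k) : ℤ)) * e0
    - 2 * ((n : ℤ) + 1) * ((n.choose (2*k) : ℤ)) * (((2*k).choose k : ℤ)) * ((k.factorial : ℤ)) * hfs

lemma Hcoef_zero {n k : ℕ} (h : n < 2 * k) : Hcoef n k = 0 := by
  simp [Hcoef, Nat.choose_eq_zero_of_lt h]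

lemma Hpoly_eq (n : ℕ) (x : ℂ) : Hpoly n x = ∑ k ∈ range (n + 1), Hterm n k x := by
  rw [Hpoly, Finset.mul_sum]
  rw [← Finset.sum_subset (Finset.range_subset_range.mpr (by omega) : range (n / 2 + 1) ⊆ range (n + 1))
      (fun k hk1 hk => ?_)]
  · refine Finset.sum_congr rfl fun k hk => ?_
    have h2k : 2 * k ≤ n := by
      have := Finset.mem_range.mp hk; omega
    have hnat : n.choose (2 * k) * (2 * k).factorial * (n - 2 * k).factorial = n.factorial :=
      Nat.choose_mul_factorial_mul_factorial h2k
    have hcoef : Hcoef n k * (k.factorial * (n - 2 * k).factorial) = n.factorial := by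
      have e0 := central_fact k
      unfold Hcoef
      zify at e0 hnat ⊢
      linear_combination ((n - 2*k).factorial : ℤ) * ((n.choose (2*k) : ℤ)) * e0 + hnat
    have hcoefC : (n.factorial : ℂ) = (Hcoef n k : ℂ) * ((k.factorial : ℂ) * ((n - 2*k).factorial : ℂ)) := by
      exact_mod_cast congrArg (Nat.cast : ℕ → ℂ) hcoef.symm
    have hk0 : ((k.factorial : ℕ) : ℂ) ≠ 0 := Nat.cast_ne_zero.mpr (Nat.factorial_ne_zero _)
    have hk1 : (((n - 2 * k).factorial : ℕ) : ℂ) ≠ 0 :=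
      Nat.cast_ne_zero.mpr (Nat.factorial_ne_zero _)
    rw [Hterm, hcoefC]
    field_simp
  · have h2k : n < 2 * k := by
      have := Finset.mem_range.mp hk1
      rcases Nat.lt_or_ge n (2 * k) with h | h
      · exact h
      · exfalso; exact hk (Finset.mem_range.mpr (by omega))
    simp [Hterm, Hcoef_zero h2k]

lemma Hterm_rec (n k : ℕ) (x : ℂ) :
    Hterm (n + 2) (k + 1) x
      = 2 * x * Hterm (n + 1) (k + 1) x - 2 * ((n : ℂ) + 1) * Hterm n k x := by
  have key := congrArg (Nat.cast : ℕ → ℂ) (Hcoef_rec n k)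
  push_cast at key
  by_cases h : 2 * k + 1 ≤ n
  · have e3 : n + 2 - 2 * (k + 1) = (n - (2 * k + 1)) + 1 := by omega
    have e2 : n + 1 - 2 * (k + 1) = n - (2 * k + 1) := by omega
    have e1 : n - 2 * k = (n - (2 * k + 1)) + 1 := by omega
    rw [Hterm, Hterm, Hterm, e1, e2, e3]
    linear_combination ((-1 : ℂ)) ^ (k + 1) * (2 * x) ^ ((n - (2 * k + 1)) + 1) * key
  · have h1 : n + 1 < 2 * (k + 1) := by omega
    have hmid : (Hcoef (n + 1) (k + 1) : ℂ) = 0 := by rw [Hcoef_zero h1]; simp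
    have e3 : n + 2 - 2 * (k + 1) = n - 2 * k := by omega
    rw [Hterm, Hterm, Hterm, e3, hmid]
    rw [hmid, zero_add] at key
    linear_combination ((-1 : ℂ)) ^ (k + 1) * (2 * x) ^ (n - 2 * k) * key

lemma Hpoly_rec (n : ℕ) (x : ℂ) :
    Hpoly (n + 2) x = 2 * x * Hpoly (n + 1) x - 2 * ((n : ℂ) + 1) * Hpoly n x := by
  rw [Hpoly_eq, Hpoly_eq, Hpoly_eq]
  rw [Finset.sum_range_succ' (fun k => Hterm (n + 2) k x) (n + 2),
    Finset.sum_range_succ' (fun k => Hterm (n + 1) k x) (n + 1)]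
  have htop1 : Hterm (n + 1) (n + 2) x = 0 := by
    simp [Hterm, Hcoef_zero (show n + 1 < 2 * (n + 2) by omega)]
  have htop0 : Hterm n (n + 1) x = 0 := by
    simp [Hterm, Hcoef_zero (show n < 2 * (n + 1) by omega)]
  have hsum2 : ∑ k ∈ range (n + 2), Hterm (n + 2) (k + 1) x
      = 2 * x * ∑ k ∈ range (n + 2), Hterm (n + 1) (k + 1) x
        - 2 * ((n : ℂ) + 1) * ∑ k ∈ range (n + 2), Hterm n k x := by
    rw [Finset.mul_sum, Finset.mul_sum, ← Finset.sum_sub_distrib]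
    exact Finset.sum_congr rfl fun k _ => Hterm_rec n k x
  have hzero : Hterm (n + 2) 0 x = 2 * x * Hterm (n + 1) 0 x := by
    simp only [Hterm, Hcoef, Nat.mul_zero, Nat.sub_zero, Nat.choose_zero_right,
      Nat.choose_self, Nat.factorial_zero, pow_zero, pow_succ]
    push_cast
    ring
  rw [hsum2, Finset.sum_range_succ (fun k => Hterm (n + 1) (k + 1) x) (n + 1),
    Finset.sum_range_succ (fun k => Hterm n k x) (n + 1), htop1, htop0, hzero]
  ring

lemma Hpoly_zero (x : ℂ) : Hpoly 0 x = 1 := by norm_num [Hpoly]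
lemma Hpoly_one (x : ℂ) : Hpoly 1 x = 2 * x := by norm_num [Hpoly]

open MeasureTheory Filter Topology

noncomputable def Jf (x : ℝ) (n : ℕ) (t : ℝ) : ℂ :=
  (t : ℂ) ^ n * Complex.exp (-(t : ℂ) ^ 2 + 2 * Complex.I * x * t)

noncomputable def Jint (x : ℝ) (n : ℕ) : ℂ := ∫ t : ℝ, Jf x n t

lemma norm_Jf (x : ℝ) (n : ℕ) (t : ℝ) : ‖Jf x n t‖ = |t| ^ n * Real.exp (-t ^ 2) := by
  unfold Jf
  have hx : (-(t : ℂ) ^ 2 + 2 * Complex.I * x * t)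
      = Complex.ofReal (-t ^ 2) + ((2 * x * t : ℝ) : ℂ) * Complex.I := by
    push_cast; ring
  rw [norm_mul, norm_pow, Complex.norm_real, Real.norm_eq_abs,
    hx, Complex.norm_exp]
  simp only [Complex.add_re, Complex.ofReal_re, Complex.mul_I_re, Complex.ofReal_im, neg_zero,
    add_zero]

lemma integrable_pow_gauss (m : ℕ) :
    Integrable (fun t : ℝ => t ^ m * Real.exp (-t ^ 2)) := by
  have h := integrable_rpow_mul_exp_neg_mul_sq (b := 1) one_pos (s := (m : ℝ))
    (lt_of_lt_of_le (by norm_num) (Nat.cast_nonneg m))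
  simpa [Real.rpow_natCast, neg_mul, one_mul] using h

lemma integrable_Jf (x : ℝ) (n : ℕ) : Integrable (Jf x n) := by
  have hg : Integrable (fun t : ℝ => Real.exp (-t ^ 2) + t ^ (2 * n) * Real.exp (-t ^ 2)) := by
    refine Integrable.add ?_ (integrable_pow_gauss (2 * n))
    simpa [neg_mul, one_mul] using integrable_exp_neg_mul_sq (b := 1) one_pos
  refine hg.mono' (Continuous.aestronglyMeasurable (by unfold Jf; fun_prop)) ?_
  refine Eventually.of_forall fun t => ?_
  rw [norm_Jf]
  have h1 : |t| ^ n ≤ 1 + t ^ (2 * n) := by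
    have ht2 : (0 : ℝ) ≤ t ^ (2 * n) := by rw [pow_mul]; positivity
    rcases le_total |t| 1 with h | h
    · have := pow_le_one₀ (n := n) (abs_nonneg t) h
      linarith
    · have h2 : |t| ^ n ≤ |t| ^ (2 * n) := pow_le_pow_right₀ h (by omega)
      have h3 : |t| ^ (2 * n) = t ^ (2 * n) := by
        rw [pow_mul, pow_mul, _root_.sq_abs]
      linarith [h2, h3 ▸ h2]
  have := mul_le_mul_of_nonneg_right h1 (Real.exp_pos (-t ^ 2)).le
  calc |t| ^ n * Real.exp (-t ^ 2) ≤ (1 + t ^ (2 * n)) * Real.exp (-t ^ 2) := this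
    _ = Real.exp (-t ^ 2) + t ^ (2 * n) * Real.exp (-t ^ 2) := by ring

lemma tendsto_Jf (x : ℝ) (n : ℕ) : Tendsto (Jf x n) (cocompact ℝ) (𝓝 0) := by
  rw [tendsto_zero_iff_norm_tendsto_zero]
  have h := tendsto_rpow_abs_mul_exp_neg_mul_sq_cocompact (one_pos) (n : ℝ)
  refine h.congr fun t => ?_
  rw [norm_Jf, Real.rpow_natCast, neg_mul, one_mul]

lemma hasDerivAt_Jf (x : ℝ) (m : ℕ) (t : ℝ) :
    HasDerivAt (Jf x m)
      ((m : ℂ) * Jf x (m - 1) t + (2 * Complex.I * x) * Jf x m t - 2 * Jf x (m + 1) t) t := by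
  have h4 := ((hasDerivAt_pow m ((t : ℝ) : ℂ)).mul
    (((hasDerivAt_pow 2 ((t : ℝ) : ℂ)).neg.add
      ((hasDerivAt_id ((t : ℝ) : ℂ)).const_mul (2 * Complex.I * (x : ℂ)))).cexp)).comp_ofReal
  simp only [id_eq] at h4
  refine h4.congr_deriv ?_
  unfold Jf
  simp only [Pi.add_apply, Pi.neg_apply]
  push_cast
  ring

lemma J_rec (x : ℝ) (m : ℕ) :
    (2 : ℂ) * Jint x (m + 1) = (m : ℂ) * Jint x (m - 1) + 2 * Complex.I * x * Jint x m := by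
  have hder := hasDerivAt_Jf x m
  have hA1 : Integrable (fun t : ℝ => (m : ℂ) * Jf x (m - 1) t) :=
    (integrable_Jf x (m - 1)).const_mul ((m : ℂ))
  have hA2 : Integrable (fun t : ℝ => 2 * Complex.I * (x : ℂ) * Jf x m t) :=
    (integrable_Jf x m).const_mul (2 * Complex.I * (x : ℂ))
  have hA : Integrable (fun t : ℝ => (m : ℂ) * Jf x (m - 1) t
      + 2 * Complex.I * (x : ℂ) * Jf x m t) := hA1.add hA2
  have hC : Integrable (fun t : ℝ => (2 : ℂ) * Jf x (m + 1) t) :=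
    (integrable_Jf x (m + 1)).const_mul 2
  have hint : Integrable (fun t : ℝ => (m : ℂ) * Jf x (m - 1) t
      + 2 * Complex.I * (x : ℂ) * Jf x m t - 2 * Jf x (m + 1) t) := hA.sub hC
  have hbot : Tendsto (Jf x m) atBot (𝓝 0) :=
    (tendsto_Jf x m).mono_left (by rw [cocompact_eq_atBot_atTop]; exact le_sup_left)
  have htop : Tendsto (Jf x m) atTop (𝓝 0) :=
    (tendsto_Jf x m).mono_left (by rw [cocompact_eq_atBot_atTop]; exact le_sup_right)
  have h0 := integral_of_hasDerivAt_of_tendsto hder hint hbot htop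
  rw [sub_zero, integral_sub hA hC, integral_add hA1 hA2, integral_const_mul,
    integral_const_mul, integral_const_mul] at h0
  unfold Jint
  linear_combination -h0

lemma J_zero (x : ℝ) : Jint x 0 = (Real.sqrt Real.pi : ℂ) * Real.exp (-x ^ 2) := by
  have h := GaussianFourier.integral_cexp_neg_mul_sq_add_real_mul_I (b := 1)
    (by norm_num) (-x)
  have hcong : ∀ t : ℝ, Complex.exp (-1 * ((t : ℂ) + ((-x : ℝ) : ℂ) * Complex.I) ^ 2)
      = Jf x 0 t * Complex.exp ((x : ℂ) ^ 2) := by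
    intro t
    unfold Jf
    rw [pow_zero, one_mul, ← Complex.exp_add]
    congr 1
    push_cast
    linear_combination (-(x : ℂ) ^ 2) * Complex.I_sq
  simp_rw [hcong] at h
  rw [integral_mul_const] at h
  have hsqrt : ((Real.sqrt Real.pi : ℝ) : ℂ) = ((Real.pi : ℂ) / 1) ^ (1 / 2 : ℂ) := by
    rw [div_one, Real.sqrt_eq_rpow, show (1 / 2 : ℂ) = ((1 / 2 : ℝ) : ℂ) by norm_num,
      ← Complex.ofReal_cpow Real.pi_pos.le]
  have hx2 : Complex.exp ((x : ℂ) ^ 2) ≠ 0 := Complex.exp_ne_zero _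
  have hJ : Jint x 0 = ((Real.pi : ℂ) / 1) ^ (1 / 2 : ℂ) / Complex.exp ((x : ℂ) ^ 2) := by
    rw [← h]; field_simp [Jint]; rfl
  rw [hJ, ← hsqrt, Complex.ofReal_exp, div_eq_iff hx2, mul_assoc, ← Complex.exp_add]
  have he : ((-x ^ 2 : ℝ) : ℂ) + (x : ℂ) ^ 2 = 0 := by push_cast; ring
  rw [he, Complex.exp_zero, mul_one]

lemma main_ind (x : ℝ) (n : ℕ) :
    Hpoly n (x : ℂ) * (Real.exp (-x ^ 2) : ℂ)
      = (-2 * Complex.I) ^ n / (Real.sqrt Real.pi : ℂ) * Jint x n := by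
  have hs : ((Real.sqrt Real.pi : ℝ) : ℂ) ≠ 0 :=
    Complex.ofReal_ne_zero.mpr (Real.sqrt_ne_zero'.mpr Real.pi_pos)
  induction n using Nat.twoStepInduction with
  | zero =>
    rw [Hpoly_zero, pow_zero, J_zero, one_mul]
    field_simp
  | one =>
    have h := J_rec x 0
    rw [Nat.cast_zero, zero_mul, zero_add] at h
    have h1 : Jint x 1 = Complex.I * (x : ℂ) * Jint x 0 := by linear_combination h / 2
    rw [Hpoly_one, pow_one, h1, J_zero]
    field_simp
    linear_combination (x : ℂ) * Complex.I_sq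
  | more m ih0 ih1 =>
    have h := J_rec x (m + 1)
    rw [Nat.add_sub_cancel, Nat.cast_add, Nat.cast_one] at h
    have h2 : Jint x (m + 1 + 1) = ((m : ℂ) + 1) / 2 * Jint x m
        + Complex.I * (x : ℂ) * Jint x (m + 1) := by linear_combination h / 2
    rw [show m + 2 = m + 1 + 1 from rfl, Hpoly_rec, h2]
    push_cast at ih0 ih1 ⊢
    linear_combination (2 * (x : ℂ)) * ih1 - 2 * ((m : ℂ) + 1) * ih0
      - (4 * (x : ℂ) * Complex.I * (-2 * Complex.I) ^ m / (Real.sqrt Real.pi : ℂ) * Jint x (m + 1)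
        + 2 * ((m : ℂ) + 1) * (-2 * Complex.I) ^ m / (Real.sqrt Real.pi : ℂ) * Jint x m)
        * Complex.I_sq

theorem hermite_integral_representation (n : ℕ) (x : ℝ) :
    Hpoly n (x : ℂ) * Real.exp (-x ^ 2) =
      (-2 * Complex.I) ^ n / Real.sqrt Real.pi *
        ∫ t : ℝ, (t : ℂ) ^ n * Complex.exp (-(t : ℂ) ^ 2 + 2 * Complex.I * x * t) := by
  exact main_ind x n
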